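/- arXiv:2311.09679 — 4 statements merged into one kernel-verified Lean document; each statement's English description precedes it below -/
import Mathlib

section
/- Quantitative implicit function theorem: Let p and q be positive integers and let f : ℝ^p × ℝ^q → ℝ^q be a C² function. Let x = (x₁, x₂) ∈ ℝ^p × ℝ^q be such that f(x) = 0 and the partial derivative T := D_{x₂}f(x) : ℝ^q → ℝ^q is invertible. Let δ > 0 be such that for every y = (y₁, y₂) with ‖y₁ − x₁‖ ≤ δ and ‖y₂ − x₂‖ ≤ δ one has ‖Id_{ℝ^q} − T⁻¹ ∘ D_{x₂}f(y)‖ ≤ 1/2. Let C > 0 be such that ‖D_{x₁}f(y)‖ ≤ C for all such y, let M = ‖T⁻¹‖, and set δ' = δ/(2MC); assume δ' ≤ δ. Then there exists a C² function φ : {y₁ ∈ ℝ^p : ‖y₁ − x₁‖ < δ'} → ℝ^q such that for every y = (y₁, y₂) ∈ ℝ^p × ℝ^q with ‖y₁ − x₁‖ < δ' and ‖y₂ − x₂‖ < δ, one has f(y) = 0 if and only if y₂ = φ(y₁). -/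
open Metric ContinuousLinearMap Filter
open scoped NNReal

theorem aux_impl {E F : Type*} [NormedAddCommGroup E] [NormedSpace ℝ E]
    [NormedAddCommGroup F] [NormedSpace ℝ F] [CompleteSpace E] [CompleteSpace F] [Nontrivial F]
    (f : E × F → F) (hf : ContDiff ℝ 2 f)
    (x₁ : E) (x₂ : F) (hfx : f (x₁, x₂) = 0)
    (T : F ≃L[ℝ] F)
    (hT : (T : F →L[ℝ] F) = (fderiv ℝ f (x₁, x₂)).comp (ContinuousLinearMap.inr ℝ E F))
    (δ : ℝ) (hδ : 0 < δ)
    (hhalf : ∀ y₁ y₂, ‖y₁ - x₁‖ ≤ δ → ‖y₂ - x₂‖ ≤ δ →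
      ‖ContinuousLinearMap.id ℝ F - (T.symm : F →L[ℝ] F).comp
          ((fderiv ℝ f (y₁, y₂)).comp (ContinuousLinearMap.inr ℝ E F))‖ ≤ 1 / 2)
    (C : ℝ) (hC : 0 < C)
    (hC' : ∀ y₁ y₂, ‖y₁ - x₁‖ ≤ δ → ‖y₂ - x₂‖ ≤ δ →
      ‖(fderiv ℝ f (y₁, y₂)).comp (ContinuousLinearMap.inl ℝ E F)‖ ≤ C)
    (M : ℝ) (hM : M = ‖(T.symm : F →L[ℝ] F)‖)
    (δ' : ℝ) (hδ'def : δ' = δ / (2 * M * C)) (hδ'δ : δ' ≤ δ) :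
    ∃ φ : E → F, ContDiffOn ℝ 2 φ (ball x₁ δ') ∧
      ∀ y₁ y₂, ‖y₁ - x₁‖ < δ' → ‖y₂ - x₂‖ < δ → (f (y₁, y₂) = 0 ↔ y₂ = φ y₁) := by
  have hfd : Differentiable ℝ f := hf.differentiable (by norm_num)
  set S : F →L[ℝ] F := (T.symm : F →L[ℝ] F) with hSdef
  -- M > 0
  have hM0 : 0 < M := by
    obtain ⟨v, hv⟩ := exists_ne (0 : F)
    rw [hM]
    refine norm_pos_iff.mpr fun h => hv ?_
    have h2 : v = S (T v) := (T.symm_apply_apply v).symm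
    rw [h] at h2
    simpa using h2
  have hδ'0 : 0 < δ' := by rw [hδ'def]; positivity
  have hMCδ' : M * C * δ' = δ / 2 := by
    rw [hδ'def]; field_simp
  -- derivative of the one-variable contraction map
  have hgd : ∀ y₁ (z : F), HasFDerivAt (fun w => w - S (f (y₁, w)))
      (ContinuousLinearMap.id ℝ F -
        S.comp ((fderiv ℝ f (y₁, z)).comp (ContinuousLinearMap.inr ℝ E F))) z := by
    intro y₁ z
    have h1 : HasFDerivAt (fun w : F => (y₁, w)) (ContinuousLinearMap.inr ℝ E F) z :=
      hasFDerivAt_prodMk_right y₁ z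
    have h2 := ((hfd (y₁, z)).hasFDerivAt).comp z h1
    exact (hasFDerivAt_id z).sub (S.hasFDerivAt.comp z h2)
  -- Lipschitz estimate on the closed ball
  have key_lip : ∀ y₁, ‖y₁ - x₁‖ ≤ δ → ∀ z ∈ closedBall x₂ δ, ∀ z' ∈ closedBall x₂ δ,
      ‖(z - S (f (y₁, z))) - (z' - S (f (y₁, z')))‖ ≤ 1 / 2 * ‖z - z'‖ := by
    intro y₁ hy₁ z hz z' hz'
    exact Convex.norm_image_sub_le_of_norm_hasFDerivWithin_le
      (fun w _ => (hgd y₁ w).hasFDerivWithinAt)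
      (fun w hw => hhalf y₁ w hy₁ (by simpa [dist_eq_norm] using hw))
      (convex_closedBall _ _) hz' hz
  -- bound in the first variable
  have hfx2 : ∀ y₁, ‖y₁ - x₁‖ ≤ δ → ‖f (y₁, x₂)‖ ≤ C * ‖y₁ - x₁‖ := by
    intro y₁ hy₁
    have hder : ∀ u ∈ closedBall x₁ δ, HasFDerivWithinAt (fun u => f (u, x₂))
        ((fderiv ℝ f (u, x₂)).comp (ContinuousLinearMap.inl ℝ E F)) (closedBall x₁ δ) u :=
      fun u _ =>
        (((hfd (u, x₂)).hasFDerivAt).comp u (hasFDerivAt_prodMk_left u x₂)).hasFDerivWithinAt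
    have hb := Convex.norm_image_sub_le_of_norm_hasFDerivWithin_le hder
      (fun u hu => hC' u x₂ (by simpa [dist_eq_norm] using hu) (by simp [hδ.le]))
      (convex_closedBall _ _) (mem_closedBall_self hδ.le)
      (by simpa [dist_eq_norm] using hy₁)
    calc ‖f (y₁, x₂)‖ = ‖f (y₁, x₂) - f (x₁, x₂)‖ := by rw [hfx, sub_zero]
    _ ≤ C * ‖y₁ - x₁‖ := hb
  have hSnorm : ∀ y₁, ‖y₁ - x₁‖ ≤ δ → ‖S (f (y₁, x₂))‖ ≤ M * (C * ‖y₁ - x₁‖) := by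
    intro y₁ hy₁
    calc ‖S (f (y₁, x₂))‖ ≤ ‖S‖ * ‖f (y₁, x₂)‖ := S.le_opNorm _
    _ ≤ M * (C * ‖y₁ - x₁‖) := by
      rw [hM]; exact mul_le_mul_of_nonneg_left (hfx2 y₁ hy₁) (norm_nonneg _)
  -- the contraction maps the ball into itself
  have hmap : ∀ y₁, ‖y₁ - x₁‖ ≤ δ' → ∀ z ∈ closedBall x₂ δ,
      (z - S (f (y₁, z))) ∈ closedBall x₂ δ := by
    intro y₁ hy₁ z hz
    have hy₁δ : ‖y₁ - x₁‖ ≤ δ := le_trans hy₁ hδ'δ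
    have h1 := key_lip y₁ hy₁δ z hz x₂ (mem_closedBall_self hδ.le)
    have h2 := hSnorm y₁ hy₁δ
    have hzn : ‖z - x₂‖ ≤ δ := by simpa [dist_eq_norm] using hz
    rw [mem_closedBall, dist_eq_norm]
    have heq : z - S (f (y₁, z)) - x₂ =
        ((z - S (f (y₁, z))) - (x₂ - S (f (y₁, x₂)))) + (- S (f (y₁, x₂))) := by abel
    have hMC : M * (C * ‖y₁ - x₁‖) ≤ δ / 2 := by
      have : M * (C * ‖y₁ - x₁‖) ≤ M * C * δ' := by nlinarith
      linarith [hMCδ' ▸ this]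
    calc ‖z - S (f (y₁, z)) - x₂‖
        ≤ ‖(z - S (f (y₁, z))) - (x₂ - S (f (y₁, x₂)))‖ + ‖-S (f (y₁, x₂))‖ := by
          rw [heq]; exact norm_add_le _ _
    _ ≤ 1 / 2 * ‖z - x₂‖ + M * (C * ‖y₁ - x₁‖) := by
          rw [norm_neg]; exact add_le_add h1 h2
    _ ≤ δ := by linarith
  -- uniqueness of zeros in the ball
  have huniq : ∀ y₁, ‖y₁ - x₁‖ ≤ δ → ∀ z ∈ closedBall x₂ δ, ∀ z' ∈ closedBall x₂ δ,
      f (y₁, z) = 0 → f (y₁, z') = 0 → z = z' := by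
    intro y₁ hy₁ z hz z' hz' h0 h0'
    have := key_lip y₁ hy₁ z hz z' hz'
    rw [h0, h0'] at this
    simp only [map_zero, sub_zero] at this
    have hn := norm_nonneg (z - z')
    have : ‖z - z'‖ = 0 := by linarith
    exact eq_of_sub_eq_zero (norm_eq_zero.mp this)
  -- existence of zeros via the contraction mapping theorem
  have hex : ∀ y₁, ‖y₁ - x₁‖ ≤ δ' → ∃ y₂ ∈ closedBall x₂ δ, f (y₁, y₂) = 0 := by
    intro y₁ hy₁
    set g : F → F := fun z => z - S (f (y₁, z)) with hg
    have hsf : Set.MapsTo g (closedBall x₂ δ) (closedBall x₂ δ) := fun z hz => hmap y₁ hy₁ z hz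
    have hcontracting : ContractingWith (1/2 : ℝ≥0) (hsf.restrict g _ _) := by
      constructor
      · rw [← NNReal.coe_lt_coe]; norm_num
      · refine LipschitzWith.of_dist_le_mul fun a b => ?_
        have := key_lip y₁ (le_trans hy₁ hδ'δ) a a.2 b b.2
        simpa [Subtype.dist_eq, dist_eq_norm] using this
    have hxs : x₂ ∈ closedBall x₂ δ := mem_closedBall_self hδ.le
    have hfin : edist x₂ (g x₂) ≠ ⊤ := edist_ne_top _ _
    refine ⟨ContractingWith.efixedPoint' g (isClosed_closedBall.isComplete) hsf hcontracting x₂ hxs hfin,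
      ContractingWith.efixedPoint_mem' (isClosed_closedBall.isComplete) hsf hcontracting hxs hfin, ?_⟩
    have hfp := ContractingWith.efixedPoint_isFixedPt' (isClosed_closedBall.isComplete) hsf
      hcontracting hxs hfin
    set z := ContractingWith.efixedPoint' g (isClosed_closedBall.isComplete) hsf hcontracting x₂ hxs hfin
    have hz0 : S (f (y₁, z)) = 0 := by
      have h := hfp
      simp only [Function.IsFixedPt, hg] at h
      exact sub_eq_self.mp h
    have := congrArg (fun w => T w) hz0
    simpa [hSdef] using this
  -- choose the implicit function
  choose! φ hφball hφzero using hex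
  -- strong bound: φ stays well inside the ball
  have hφnear : ∀ y₁, ‖y₁ - x₁‖ ≤ δ' → ‖φ y₁ - x₂‖ ≤ 2 * (M * (C * ‖y₁ - x₁‖)) := by
    intro y₁ hy₁
    have hy₁δ : ‖y₁ - x₁‖ ≤ δ := le_trans hy₁ hδ'δ
    have h1 := key_lip y₁ hy₁δ (φ y₁) (hφball y₁ hy₁) x₂ (mem_closedBall_self hδ.le)
    rw [hφzero y₁ hy₁] at h1
    simp only [map_zero, sub_zero] at h1
    have h2 := hSnorm y₁ hy₁δ
    have heq : φ y₁ - x₂ = (φ y₁ - (x₂ - S (f (y₁, x₂)))) + (- S (f (y₁, x₂))) := by abel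
    have h3 : ‖φ y₁ - x₂‖ ≤ 1 / 2 * ‖φ y₁ - x₂‖ + M * (C * ‖y₁ - x₁‖) := by
      calc ‖φ y₁ - x₂‖ ≤ ‖φ y₁ - (x₂ - S (f (y₁, x₂)))‖ + ‖-S (f (y₁, x₂))‖ := by
            rw [heq]; exact norm_add_le _ _
      _ ≤ 1 / 2 * ‖φ y₁ - x₂‖ + M * (C * ‖y₁ - x₁‖) := by
            rw [norm_neg]; exact add_le_add h1 h2
    linarith
  have hφlt : ∀ a, a ∈ ball x₁ δ' → ‖φ a - x₂‖ < δ := by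
    intro a ha
    rw [mem_ball, dist_eq_norm] at ha
    have h1 := hφnear a ha.le
    have h2 : 2 * (M * (C * ‖a - x₁‖)) < 2 * (M * C * δ') := by nlinarith
    calc ‖φ a - x₂‖ ≤ 2 * (M * (C * ‖a - x₁‖)) := h1
    _ < 2 * (M * C * δ') := h2
    _ = δ := by rw [hMCδ']; ring
  refine ⟨φ, ?_, ?_⟩
  · -- smoothness
    intro a ha
    have haδ' : ‖a - x₁‖ < δ' := by rwa [mem_ball, dist_eq_norm] at ha
    set b := φ a with hbdef
    have hbmem : b ∈ closedBall x₂ δ := hφball a haδ'.le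
    have hb0 : f (a, b) = 0 := hφzero a haδ'.le
    have hbδ : ‖b - x₂‖ < δ := hφlt a ha
    -- invertibility of the partial derivative at (a, b)
    set D : E × F →L[ℝ] F := fderiv ℝ f (a, b) with hDdef
    set A : F →L[ℝ] F := S.comp (D.comp (ContinuousLinearMap.inr ℝ E F)) with hAdef
    have hA : ‖1 - A‖ < 1 := by
      have := hhalf a b (haδ'.le.trans hδ'δ) hbδ.le
      rw [← ContinuousLinearMap.one_def] at this
      calc ‖1 - A‖ ≤ 1 / 2 := this
      _ < 1 := by norm_num
    set u : (F →L[ℝ] F)ˣ := Units.oneSub (1 - A) hA with hudef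
    have huval : (u : F →L[ℝ] F) = A := by
      simp [hudef, Units.oneSub]
    set eA : F ≃L[ℝ] F := ContinuousLinearEquiv.unitsEquiv ℝ F u with heA
    have heAapp : ∀ v, eA v = A v := fun v => by
      rw [heA, ContinuousLinearEquiv.unitsEquiv_apply, huval]
    set e₂ : F ≃L[ℝ] F := eA.trans T with he₂
    have he₂app : ∀ v : F, e₂ v = D ((0 : E), v) := by
      intro v
      have : e₂ v = T (eA v) := rfl
      rw [this, heAapp]
      simp only [hAdef, ContinuousLinearMap.comp_apply, ContinuousLinearMap.inr_apply]
      exact T.apply_symm_apply _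
    -- the full derivative as an equivalence
    have hsplit : ∀ (y : E × F), D y = D (y.1, (0 : F)) + D ((0 : E), y.2) := by
      intro y
      rw [← map_add]
      congr 1
      simp
    set L : E × F →L[ℝ] E × F := (ContinuousLinearMap.fst ℝ E F).prod D with hLdef
    set L' : E × F →L[ℝ] E × F := (ContinuousLinearMap.fst ℝ E F).prod
      ((e₂.symm : F →L[ℝ] F).comp
        ((ContinuousLinearMap.snd ℝ E F) -
          D.comp ((ContinuousLinearMap.inl ℝ E F).comp (ContinuousLinearMap.fst ℝ E F)))) with hL'def
    have hLL' : Function.LeftInverse L' L := by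
      intro y
      refine Prod.ext rfl ?_
      show e₂.symm (D y - D (y.1, 0)) = y.2
      have h1 : D y - D (y.1, (0 : F)) = e₂ y.2 := by
        rw [he₂app, hsplit y]; abel
      rw [h1, ContinuousLinearEquiv.symm_apply_apply]
    have hL'L : Function.RightInverse L' L := by
      intro y
      refine Prod.ext rfl ?_
      show D (y.1, e₂.symm (y.2 - D (y.1, 0))) = y.2
      have h1 : D (y.1, (e₂.symm (y.2 - D (y.1, 0)) : F)) =
          D (y.1, (0 : F)) + e₂ (e₂.symm (y.2 - D (y.1, 0))) := by
        rw [he₂app]; exact hsplit _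
      rw [h1, ContinuousLinearEquiv.apply_symm_apply]
      abel
    set eDF : (E × F) ≃L[ℝ] (E × F) := ContinuousLinearEquiv.equivOfInverse L L' hLL' hL'L
      with heDF
    -- inverse function theorem
    set Fm : E × F → E × F := fun y => (y.1, f y) with hFm
    have hFmc : ContDiffAt ℝ 2 Fm (a, b) := (contDiffAt_fst).prodMk hf.contDiffAt
    have hF' : HasFDerivAt Fm (eDF : E × F →L[ℝ] E × F) (a, b) := by
      have h1 : HasFDerivAt Fm L (a, b) :=
        HasFDerivAt.prodMk hasFDerivAt_fst (hfd (a, b)).hasFDerivAt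
      have : (eDF : E × F →L[ℝ] E × F) = L := rfl
      rw [this]
      exact h1
    have hone : (2 : WithTop ℕ∞) ≠ 0 := by norm_num
    set G : E × F → E × F := hFmc.localInverse hF' hone with hG
    have hGsm : ContDiffAt ℝ 2 G (Fm (a, b)) := hFmc.to_localInverse hF' hone
    have hGs : G = (hFmc.hasStrictFDerivAt' hF' hone).localInverse Fm eDF (a, b) := rfl
    have hFmab : Fm (a, b) = (a, (0 : F)) := by simp [hFm, hb0]
    have hGab : G (a, 0) = (a, b) := by
      rw [← hFmab]
      exact hFmc.localInverse_apply_image hF' hone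
    have hright : ∀ᶠ w in nhds (a, (0 : F)), Fm (G w) = w := by
      rw [← hFmab, hGs]
      exact (hFmc.hasStrictFDerivAt' hF' hone).eventually_right_inverse
    -- the candidate smooth function
    set ψ : E → F := fun z₁ => (G (z₁, 0)).2 with hψ
    rw [hFmab] at hGsm
    have hψsm : ContDiffAt ℝ 2 ψ a := by
      have h0 : ContDiffAt ℝ 2 (fun z₁ : E => (z₁, (0 : F))) a :=
        contDiffAt_id.prodMk contDiffAt_const
      exact contDiffAt_snd.comp a (hGsm.comp a h0)
    -- eventual equality with φ
    have hc : Tendsto (fun z₁ : E => (z₁, (0 : F))) (nhds a) (nhds (a, (0 : F))) := by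
      exact (continuous_id.prodMk continuous_const).tendsto a
    have t1 : ∀ᶠ z₁ in nhds a, Fm (G (z₁, 0)) = (z₁, (0 : F)) := hc.eventually hright
    have hGcont : ContinuousAt G (a, (0 : F)) := hGsm.continuousAt
    have t2 : ∀ᶠ z₁ in nhds a, ‖ψ z₁ - x₂‖ < δ := by
      have htend : Tendsto (fun z₁ => ‖ψ z₁ - x₂‖) (nhds a) (nhds ‖b - x₂‖) := by
        have h1 : Tendsto (fun z₁ : E => G (z₁, 0)) (nhds a) (nhds (a, b)) := by
          rw [← hGab]
          exact (hGcont.tendsto).comp hc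
        have h2 : Tendsto (fun w : E × F => ‖w.2 - x₂‖) (nhds (a, b)) (nhds ‖b - x₂‖) :=
          ((continuous_snd.sub continuous_const).norm).tendsto (a, b)
        exact h2.comp h1
      exact htend.eventually_lt_const hbδ
    have t3 : ∀ᶠ z₁ in nhds a, ‖z₁ - x₁‖ < δ' := by
      have : ∀ᶠ z₁ in nhds a, z₁ ∈ ball x₁ δ' := isOpen_ball.eventually_mem ha
      exact this.mono fun z₁ hz₁ => by rwa [mem_ball, dist_eq_norm] at hz₁
    have heq : ∀ᶠ z₁ in nhds a, φ z₁ = ψ z₁ := by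
      filter_upwards [t1, t2, t3] with z₁ h1 h2 h3
      have hfst : (G (z₁, (0 : F))).1 = z₁ := congrArg Prod.fst h1
      have hzero : f (z₁, ψ z₁) = 0 := by
        have h4 : f (G (z₁, (0 : F))) = (0 : F) := congrArg Prod.snd h1
        have h5 : G (z₁, (0 : F)) = (z₁, ψ z₁) := by
          rw [hψ]; exact Prod.ext hfst rfl
        rwa [h5] at h4
      have h6 : ψ z₁ ∈ closedBall x₂ δ := by
        rw [mem_closedBall, dist_eq_norm]; exact h2.le
      exact (huniq z₁ (h3.le.trans hδ'δ) (ψ z₁) h6 (φ z₁) (hφball z₁ h3.le)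
        hzero (hφzero z₁ h3.le)).symm
    exact (hψsm.congr_of_eventuallyEq heq).contDiffWithinAt
  · -- the characterization of zeros
    intro y₁ y₂ hy₁ hy₂
    constructor
    · intro h0
      exact huniq y₁ (hy₁.le.trans hδ'δ) y₂
        (by rw [mem_closedBall, dist_eq_norm]; exact hy₂.le)
        (φ y₁) (hφball y₁ hy₁.le) h0 (hφzero y₁ hy₁.le)
    · intro h
      rw [h]
      exact hφzero y₁ hy₁.le

/-- Quantitative implicit function theorem. Let `f : ℝᵖ × ℝ^q → ℝ^q` be `C²`,
`x = (x₁, x₂)` with `f x = 0` and `T = D_{x₂} f (x)` invertible. If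
`‖Id - T⁻¹ ∘ D_{x₂} f (y)‖ ≤ 1/2` and `‖D_{x₁} f (y)‖ ≤ C` on the `δ`-bi-ball around `x`,
`M = ‖T⁻¹‖` and `δ' = δ / (2 M C) ≤ δ`, then on `{‖y₁ - x₁‖ < δ'}` the zero set of `f`
(within `‖y₂ - x₂‖ < δ`) is the graph of a `C²` function `φ`. -/
theorem stmt0 (p q : ℕ) (hp : 0 < p) (hq : 0 < q)
    (f : EuclideanSpace ℝ (Fin p) × EuclideanSpace ℝ (Fin q) → EuclideanSpace ℝ (Fin q))
    (hf : ContDiff ℝ 2 f)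
    (x₁ : EuclideanSpace ℝ (Fin p)) (x₂ : EuclideanSpace ℝ (Fin q))
    (hfx : f (x₁, x₂) = 0)
    (T : EuclideanSpace ℝ (Fin q) ≃L[ℝ] EuclideanSpace ℝ (Fin q))
    (hT : (T : EuclideanSpace ℝ (Fin q) →L[ℝ] EuclideanSpace ℝ (Fin q)) =
      (fderiv ℝ f (x₁, x₂)).comp
        (ContinuousLinearMap.inr ℝ (EuclideanSpace ℝ (Fin p)) (EuclideanSpace ℝ (Fin q))))
    (δ : ℝ) (hδ : 0 < δ)
    (hhalf : ∀ y₁ y₂, ‖y₁ - x₁‖ ≤ δ → ‖y₂ - x₂‖ ≤ δ →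
      ‖ContinuousLinearMap.id ℝ (EuclideanSpace ℝ (Fin q)) -
        (T.symm : EuclideanSpace ℝ (Fin q) →L[ℝ] EuclideanSpace ℝ (Fin q)).comp
          ((fderiv ℝ f (y₁, y₂)).comp
            (ContinuousLinearMap.inr ℝ (EuclideanSpace ℝ (Fin p))
              (EuclideanSpace ℝ (Fin q))))‖ ≤ 1 / 2)
    (C : ℝ) (hC : 0 < C)
    (hC' : ∀ y₁ y₂, ‖y₁ - x₁‖ ≤ δ → ‖y₂ - x₂‖ ≤ δ →
      ‖(fderiv ℝ f (y₁, y₂)).comp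
        (ContinuousLinearMap.inl ℝ (EuclideanSpace ℝ (Fin p))
          (EuclideanSpace ℝ (Fin q)))‖ ≤ C)
    (M : ℝ)
    (hM : M = ‖(T.symm : EuclideanSpace ℝ (Fin q) →L[ℝ] EuclideanSpace ℝ (Fin q))‖)
    (δ' : ℝ) (hδ'def : δ' = δ / (2 * M * C)) (hδ'δ : δ' ≤ δ) :
    ∃ φ : EuclideanSpace ℝ (Fin p) → EuclideanSpace ℝ (Fin q),
      ContDiffOn ℝ 2 φ (ball x₁ δ') ∧
      ∀ y₁ y₂, ‖y₁ - x₁‖ < δ' → ‖y₂ - x₂‖ < δ → (f (y₁, y₂) = 0 ↔ y₂ = φ y₁) := by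
  haveI : Nontrivial (EuclideanSpace ℝ (Fin q)) := by
    have : Nonempty (Fin q) := ⟨⟨0, hq⟩⟩
    infer_instance
  exact aux_impl f hf x₁ x₂ hfx T hT δ hδ hhalf C hC hC' M hM δ' hδ'def hδ'δ
end

section
/- Let 1 ≤ r ≤ n be integers, let (F, g) and (E, h) be complex inner product (Hermitian) spaces of finite dimensions n and r respectively, and let f : F → E be a linear map of rank r (i.e., surjective). Then f ∘ f* : E → E is invertible and ‖(f ∘ f*)⁻¹‖ ≤ (inf_{g ∈ L_sing(F,E)} ‖f − g‖²)⁻¹, i.e., the operator norm of the inverse of f f* is at most the inverse of the square of the distance from f to the set of non-surjective linear maps from F to E. -/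
open ContinuousLinearMap
open scoped InnerProductSpace ComplexConjugate

set_option maxHeartbeats 1000000

/-- Let `1 ≤ r ≤ n`, let `F` and `E` be complex Hermitian spaces of dimensions `n` and `r`,
and let `f : F → E` be a surjective linear map. Then `f ∘ f*` is invertible and
`‖(f ∘ f*)⁻¹‖ ≤ (inf_{M non-surjective} ‖f - M‖²)⁻¹`. -/
theorem stmt2 (n r : ℕ) (hr : 1 ≤ r) (hrn : r ≤ n)
    (F E : Type*) [NormedAddCommGroup F] [InnerProductSpace ℂ F]
    [NormedAddCommGroup E] [InnerProductSpace ℂ E]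
    [FiniteDimensional ℂ F] [FiniteDimensional ℂ E]
    (hF : Module.finrank ℂ F = n) (hE : Module.finrank ℂ E = r)
    (f : F →L[ℂ] E) (hf : Function.Surjective f) :
    ∃ g : E ≃L[ℂ] E, (g : E →L[ℂ] E) = f ∘L (ContinuousLinearMap.adjoint f) ∧
      ‖(g.symm : E →L[ℂ] E)‖ ≤
        (sInf {d : ℝ | ∃ M : F →L[ℂ] E, ¬ Function.Surjective M ∧ d = ‖f - M‖ ^ 2})⁻¹ := by
  classical
  have hEnt : Nontrivial E := by
    have : 0 < Module.finrank ℂ E := by omega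
    exact Module.nontrivial_of_finrank_pos this
  set S : E →L[ℂ] E := f ∘L adjoint f with hS
  have hkey : ∀ y : E, (inner ℂ y (S y) : ℂ) = (‖adjoint f y‖ : ℂ) ^ 2 := by
    intro y
    have h1 : (inner ℂ (adjoint f y) (adjoint f y) : ℂ) = inner ℂ y (S y) :=
      adjoint_inner_left f (adjoint f y) y
    rw [← h1, inner_self_eq_norm_sq_to_K]; norm_cast
  have hinj : ∀ y : E, adjoint f y = 0 → y = 0 := by
    intro y h
    obtain ⟨x, hx⟩ := hf y
    have h1 : (inner ℂ y y : ℂ) = inner ℂ (adjoint f y) x := by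
      rw [adjoint_inner_left, hx]
    rw [h, inner_zero_left] at h1
    exact inner_self_eq_zero.mp h1
  obtain ⟨e, heS, hmin⟩ := (isCompact_sphere (0 : E) 1).exists_isMinOn
    (NormedSpace.sphere_nonempty.mpr zero_le_one)
    ((adjoint f).continuous.norm.continuousOn)
  have he : ‖e‖ = 1 := mem_sphere_zero_iff_norm.mp heS
  set c : ℝ := ‖adjoint f e‖ with hc
  have hcpos : 0 < c := by
    rcases (norm_nonneg (adjoint f e)).lt_or_eq with h | h
    · exact h
    · exfalso
      have h1 : adjoint f e = 0 := by rwa [eq_comm, norm_eq_zero] at h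
      have := hinj e h1
      rw [this, norm_zero] at he; norm_num at he
  have hlow : ∀ y : E, c * ‖y‖ ≤ ‖adjoint f y‖ := by
    intro y
    rcases eq_or_ne y 0 with rfl | hy
    · simp
    · have hny : 0 < ‖y‖ := norm_pos_iff.mpr hy
      have hmem : (‖y‖⁻¹ • y) ∈ Metric.sphere (0 : E) 1 := by
        rw [mem_sphere_zero_iff_norm, norm_smul, norm_inv, norm_norm,
          inv_mul_cancel₀ hny.ne']
      have h1 := hmin hmem
      simp only [Set.mem_setOf_eq] at h1
      have h2 : ‖adjoint f (‖y‖⁻¹ • y)‖ = ‖y‖⁻¹ * ‖adjoint f y‖ := by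
        rw [map_smul_of_tower, norm_smul, norm_inv, norm_norm]
      rw [h2] at h1
      calc c * ‖y‖ ≤ (‖y‖⁻¹ * ‖adjoint f y‖) * ‖y‖ :=
            mul_le_mul_of_nonneg_right h1 hny.le
        _ = ‖adjoint f y‖ := by field_simp
  have hSinj : Function.Injective S := by
    rw [injective_iff_map_eq_zero]
    intro y hy
    have h0 : ((‖adjoint f y‖ : ℂ)) ^ 2 = 0 := by rw [← hkey, hy]; simp
    norm_cast at h0
    have h0' : ‖adjoint f y‖ = 0 := pow_eq_zero_iff two_ne_zero |>.mp h0
    exact hinj y (norm_eq_zero.mp h0')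
  have hSsurj : Function.Surjective S :=
    (LinearMap.injective_iff_surjective (f := (S : E →ₗ[ℂ] E))).mp hSinj
  let gl : E ≃ₗ[ℂ] E := LinearEquiv.ofBijective (S : E →ₗ[ℂ] E) ⟨hSinj, hSsurj⟩
  let g : E ≃L[ℂ] E := gl.toContinuousLinearEquiv
  have hg : (g : E →L[ℂ] E) = S := by ext x; rfl
  refine ⟨g, hg, ?_⟩
  have hbound : ‖(g.symm : E →L[ℂ] E)‖ ≤ (c ^ 2)⁻¹ := by
    apply opNorm_le_bound _ (by positivity)
    intro y
    set z := (g.symm : E →L[ℂ] E) y with hz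
    have hSz : S z = y := by
      rw [← hg]; exact g.apply_symm_apply y
    have h1 : ‖adjoint f z‖ ^ 2 ≤ ‖z‖ * ‖y‖ := by
      have hcs : ‖(inner ℂ z (S z) : ℂ)‖ ≤ ‖z‖ * ‖S z‖ := norm_inner_le_norm _ _
      rw [hkey z, hSz] at hcs
      calc ‖adjoint f z‖ ^ 2 = ‖((‖adjoint f z‖ : ℂ)) ^ 2‖ := by
            rw [norm_pow, Complex.norm_real, Real.norm_eq_abs, abs_of_nonneg (norm_nonneg _)]
        _ ≤ ‖z‖ * ‖y‖ := hcs
    have h2 : (c * ‖z‖) ^ 2 ≤ ‖z‖ * ‖y‖ :=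
      (pow_le_pow_left₀ (by positivity) (hlow z) 2).trans h1
    rcases eq_or_ne z 0 with h0 | h0
    · rw [h0, norm_zero]; positivity
    · have hnz : 0 < ‖z‖ := norm_pos_iff.mpr h0
      rw [inv_mul_eq_div, le_div_iff₀ (by positivity)]
      nlinarith [h2, hnz]
  refine hbound.trans ?_
  set Sset : Set ℝ := {d : ℝ | ∃ M : F →L[ℂ] E, ¬ Function.Surjective M ∧ d = ‖f - M‖ ^ 2}
    with hSset
  have hbdd : BddBelow Sset := by
    refine ⟨0, fun d hd => ?_⟩
    obtain ⟨M, _, rfl⟩ := hd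
    positivity
  let D : F →L[ℂ] E := (innerSL ℂ (adjoint f e)).smulRight e
  have hD : ∀ x, D x = (inner ℂ (adjoint f e) x : ℂ) • e := fun x => rfl
  have hDnorm : ‖D‖ ≤ c := by
    apply opNorm_le_bound _ hcpos.le
    intro x
    rw [hD, norm_smul, he, mul_one]
    exact norm_inner_le_norm _ _
  have hMns : ¬ Function.Surjective (f - D) := by
    intro hsurj
    obtain ⟨x, hx⟩ := hsurj e
    have h1 : (inner ℂ e (f x) : ℂ) = inner ℂ (adjoint f e) x := (adjoint_inner_left f x e).symm
    have h2 : (inner ℂ e e : ℂ) = 1 := by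
      rw [inner_self_eq_norm_sq_to_K, he]; norm_num
    have h0 : (inner ℂ e ((f - D) x) : ℂ) = 0 := by
      simp only [ContinuousLinearMap.sub_apply, inner_sub_right, hD, inner_smul_right,
        h1, h2, mul_one, sub_self]
    rw [hx, inner_self_eq_zero] at h0
    rw [h0, norm_zero] at he; norm_num at he
  have hmem2 : ‖D‖ ^ 2 ∈ Sset := ⟨f - D, hMns, by rw [sub_sub_cancel]⟩
  have hlowset : ∀ d ∈ Sset, c ^ 2 ≤ d := by
    rintro d ⟨M, hM, rfl⟩
    have hrange : LinearMap.range (M : F →ₗ[ℂ] E) ≠ ⊤ := by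
      intro h
      exact hM (LinearMap.range_eq_top.mp h)
    have hbot : (LinearMap.range (M : F →ₗ[ℂ] E))ᗮ ≠ ⊥ := by
      rw [Ne, Submodule.orthogonal_eq_bot_iff]; exact hrange
    obtain ⟨y, hy, hy0⟩ := Submodule.exists_mem_ne_zero_of_ne_bot hbot
    have hMy : adjoint M y = 0 := by
      have h0 : (inner ℂ (adjoint M y) (adjoint M y) : ℂ) = 0 := by
        rw [adjoint_inner_left]
        exact inner_eq_zero_symm.mp
          ((Submodule.mem_orthogonal _ y).mp hy (M (adjoint M y)) ⟨adjoint M y, rfl⟩)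
      exact inner_self_eq_zero.mp h0
    have h2 : adjoint f y = adjoint (f - M) y := by
      rw [map_sub, ContinuousLinearMap.sub_apply, hMy, sub_zero]
    have h3 : ‖adjoint (f - M) y‖ ≤ ‖f - M‖ * ‖y‖ := by
      calc ‖adjoint (f - M) y‖ ≤ ‖adjoint (f - M)‖ * ‖y‖ := le_opNorm _ _
        _ = ‖f - M‖ * ‖y‖ := by
            rw [LinearIsometryEquiv.norm_map]
    have hny : 0 < ‖y‖ := norm_pos_iff.mpr hy0
    have hcle : c ≤ ‖f - M‖ := by
      have := (hlow y).trans (h2 ▸ h3)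
      exact le_of_mul_le_mul_right this hny
    exact pow_le_pow_left₀ hcpos.le hcle 2
  have hge : c ^ 2 ≤ sInf Sset := le_csInf ⟨_, hmem2⟩ hlowset
  have hle : sInf Sset ≤ c ^ 2 :=
    (csInf_le hbdd hmem2).trans (pow_le_pow_left₀ (norm_nonneg _) hDnorm 2)
  have hpos : 0 < sInf Sset := lt_of_lt_of_le (by positivity) hge
  exact inv_anti₀ hpos hle
end

section
/- Let 1 ≤ r ≤ n be integers, let (F, g) and (E, h) be complex inner product (Hermitian) spaces of finite dimensions n and r respectively, and let f : F → E be a linear map of rank r (i.e., surjective). Then the square of the distance from f to the set of non-surjective linear maps equals the smallest eigenvalue of the positive self-adjoint operator f ∘ f* : E → E; that is, (inf_{g ∈ L_sing(F,E)} ‖f − g‖)² = min spec(f ∘ f*). -/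
open ContinuousLinearMap

open scoped InnerProductSpace

/-- In finite dimension, spectrum membership is equivalent to having an eigenvector. -/
lemma stmt3_aux_spec_iff {E : Type*} [NormedAddCommGroup E] [NormedSpace ℂ E]
    [FiniteDimensional ℂ E] (T : E →L[ℂ] E) (t : ℂ) :
    t ∈ spectrum ℂ T ↔ ∃ v : E, v ≠ 0 ∧ T v = t • v := by
  rw [spectrum.mem_iff, ContinuousLinearMap.isUnit_iff_bijective]
  set L : E →L[ℂ] E := algebraMap ℂ (E →L[ℂ] E) t - T with hL
  have hLapp : ∀ v : E, L v = t • v - T v := by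
    intro v; simp [hL, ContinuousLinearMap.sub_apply, Module.algebraMap_end_apply]
  constructor
  · intro h
    have hinj : ¬ Function.Injective L := by
      intro hinj
      exact h ⟨hinj, LinearMap.injective_iff_surjective.mp hinj⟩
    rw [Function.not_injective_iff] at hinj
    obtain ⟨a, b, hab, hne⟩ := hinj
    refine ⟨a - b, sub_ne_zero.mpr hne, ?_⟩
    have : L (a - b) = 0 := by rw [map_sub, hab, sub_self]
    rw [hLapp, sub_eq_zero] at this
    exact this.symm
  · intro ⟨v, hv, hTv⟩ h
    have : L v = 0 := by rw [hLapp, hTv, sub_self]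
    exact hv (h.1 (by rw [this, map_zero]))

/-- Let `1 ≤ r ≤ n`, let `F` and `E` be complex Hermitian spaces of dimensions `n` and `r`,
and let `f : F → E` be a surjective linear map. Then the square of the distance from `f`
to the set of non-surjective linear maps equals the smallest point of the spectrum of the
positive self-adjoint operator `f ∘ f* : E → E`. -/
theorem stmt3 (n r : ℕ) (hr : 1 ≤ r) (hrn : r ≤ n)
    (F E : Type*) [NormedAddCommGroup F] [InnerProductSpace ℂ F]
    [NormedAddCommGroup E] [InnerProductSpace ℂ E]
    [FiniteDimensional ℂ F] [FiniteDimensional ℂ E]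
    (hF : Module.finrank ℂ F = n) (hE : Module.finrank ℂ E = r)
    (f : F →L[ℂ] E) (hf : Function.Surjective f) :
    (sInf {d : ℝ | ∃ M : F →L[ℂ] E, ¬ Function.Surjective M ∧ d = ‖f - M‖}) ^ 2 =
      sInf {t : ℝ | (t : ℂ) ∈ spectrum ℂ (f ∘L (ContinuousLinearMap.adjoint f))} := by
  have hne : Nonempty (Fin r) := ⟨⟨0, hr⟩⟩
  set T : E →L[ℂ] E := f ∘L adjoint f with hTdef
  have hsa : IsSelfAdjoint T := by
    rw [IsSelfAdjoint, star_eq_adjoint, hTdef, adjoint_comp, adjoint_adjoint]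
  have hT : (T : E →ₗ[ℂ] E).IsSymmetric := hsa.isSymmetric
  set b := hT.eigenvectorBasis hE with hb
  set μ := hT.eigenvalues hE with hμ
  obtain ⟨i₀, -, hmin'⟩ := Finset.exists_min_image Finset.univ μ ⟨⟨0, hr⟩, Finset.mem_univ _⟩
  have hmin : ∀ i, μ i₀ ≤ μ i := fun i => hmin' i (Finset.mem_univ i)
  set m := μ i₀ with hm
  -- key identity
  have key : ∀ y : E, ‖adjoint f y‖ ^ 2 = RCLike.re (⟪y, T y⟫_ℂ) := by
    intro y
    have h1 : ⟪adjoint f y, adjoint f y⟫_ℂ = ⟪y, T y⟫_ℂ := by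
      rw [adjoint_inner_left]; rfl
    rw [← h1, inner_self_eq_norm_sq]
  -- quadratic form lower bound
  have quad : ∀ y : E, m * ‖y‖ ^ 2 ≤ ‖adjoint f y‖ ^ 2 := by
    intro y
    rw [key]
    have hinner : ⟪y, T y⟫_ℂ = ∑ i, (starRingEnd ℂ) (b.repr y i) * ((μ i : ℂ) * b.repr y i) := by
      rw [← b.repr.inner_map_map y (T y), PiLp.inner_apply]
      refine Finset.sum_congr rfl fun i _ => ?_
      have h2 : b.repr (T y) i = (μ i : ℂ) * b.repr y i :=
        hT.eigenvectorBasis_apply_self_apply hE y i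
      rw [RCLike.inner_apply, h2]; ring
    have hnorm : ‖y‖ ^ 2 = ∑ i, ‖b.repr y i‖ ^ 2 := by
      rw [← b.repr.norm_map y, EuclideanSpace.norm_eq, Real.sq_sqrt (by positivity)]
    have hterm : ∀ i, RCLike.re ((starRingEnd ℂ) (b.repr y i) * ((μ i : ℂ) * b.repr y i))
        = μ i * ‖b.repr y i‖ ^ 2 := by
      intro i
      have h3 : (starRingEnd ℂ) (b.repr y i) * ((μ i : ℂ) * b.repr y i)
          = ((μ i * ‖b.repr y i‖ ^ 2 : ℝ) : ℂ) := by
        calc (starRingEnd ℂ) (b.repr y i) * ((μ i : ℂ) * b.repr y i)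
            = (μ i : ℂ) * (b.repr y i * (starRingEnd ℂ) (b.repr y i)) := by ring
          _ = (μ i : ℂ) * (Complex.normSq (b.repr y i) : ℂ) := by rw [Complex.mul_conj]
          _ = ((μ i * ‖b.repr y i‖ ^ 2 : ℝ) : ℂ) := by
              rw [Complex.normSq_eq_norm_sq]; push_cast; ring
      rw [h3]; exact Complex.ofReal_re _
    rw [hinner, map_sum, hnorm, Finset.mul_sum]
    refine Finset.sum_le_sum fun i _ => ?_
    rw [hterm i]
    exact mul_le_mul_of_nonneg_right (hmin i) (sq_nonneg _)
  -- eigenvector facts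
  have hbnorm : ‖b i₀‖ = 1 := b.orthonormal.1 i₀
  have hbne : b i₀ ≠ 0 := fun h => by simp [h] at hbnorm
  have hby : T (b i₀) = (m : ℂ) • b i₀ := hT.apply_eigenvectorBasis hE i₀
  have hmval : ‖adjoint f (b i₀)‖ ^ 2 = m := by
    rw [key, hby, inner_smul_right, inner_self_eq_norm_sq_to_K, hbnorm]
    simp
  have hm0 : 0 ≤ m := hmval ▸ sq_nonneg _
  -- the minimizing non-surjective map
  set y₀ := b i₀ with hy₀
  set R : F →L[ℂ] E := (innerSL ℂ (adjoint f y₀)).smulRight y₀ with hR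
  set M₀ : F →L[ℂ] E := f - R with hM₀def
  have hfsub : f - M₀ = R := by rw [hM₀def, sub_sub_cancel]
  have hRapp : ∀ x, R x = ⟪y₀, f x⟫_ℂ • y₀ := by
    intro x
    rw [hR]
    simp only [ContinuousLinearMap.smulRight_apply, innerSL_apply_apply]
    rw [adjoint_inner_left]
  have hM₀ : ¬ Function.Surjective M₀ := by
    intro hs
    obtain ⟨x, hx⟩ := hs y₀
    have h0 : ⟪y₀, M₀ x⟫_ℂ = 0 := by
      rw [hM₀def, ContinuousLinearMap.sub_apply, inner_sub_right, hRapp, inner_smul_right,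
        inner_self_eq_norm_sq_to_K, hbnorm]
      simp
    rw [hx, inner_self_eq_norm_sq_to_K, hbnorm] at h0
    simp at h0
  have hRnorm : ‖f - M₀‖ = Real.sqrt m := by
    rw [hfsub, hR, ContinuousLinearMap.norm_smulRight_apply, innerSL_apply_norm, hbnorm, mul_one]
    rw [← Real.sqrt_sq (norm_nonneg (adjoint f y₀)), hmval]
  -- lower bound for the distance set
  have lbD : ∀ d ∈ {d : ℝ | ∃ M : F →L[ℂ] E, ¬ Function.Surjective M ∧ d = ‖f - M‖},
      Real.sqrt m ≤ d := by
    rintro d ⟨M, hMsurj, rfl⟩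
    have hKne : LinearMap.range (M : F →ₗ[ℂ] E) ≠ ⊤ := by
      rwa [Ne, LinearMap.range_eq_top]
    have hKbot : (LinearMap.range (M : F →ₗ[ℂ] E))ᗮ ≠ ⊥ := by
      rwa [Ne, Submodule.orthogonal_eq_bot_iff]
    obtain ⟨y, hyK, hy0⟩ := (Submodule.ne_bot_iff _).mp hKbot
    set u : E := ((‖y‖⁻¹ : ℝ) : ℂ) • y with hu
    have hu1 : ‖u‖ = 1 := by
      rw [hu, norm_smul, Complex.norm_real, Real.norm_eq_abs, abs_inv, abs_norm]
      field_simp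
    have huK : u ∈ (LinearMap.range (M : F →ₗ[ℂ] E))ᗮ := Submodule.smul_mem _ _ hyK
    have hMadj : adjoint M u = 0 := by
      have h0 : ⟪adjoint M u, adjoint M u⟫_ℂ = 0 := by
        rw [adjoint_inner_left]
        exact (Submodule.mem_orthogonal' _ u).mp huK _ ⟨adjoint M u, rfl⟩
      exact inner_self_eq_zero.mp h0
    have h1 : ‖adjoint f u‖ ≤ ‖f - M‖ := by
      have e1 : adjoint f u = adjoint (f - M) u := by
        rw [map_sub, ContinuousLinearMap.sub_apply, hMadj, sub_zero]
      calc ‖adjoint f u‖ = ‖adjoint (f - M) u‖ := by rw [e1]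
        _ ≤ ‖adjoint (f - M)‖ * ‖u‖ := le_opNorm _ _
        _ = ‖f - M‖ := by rw [hu1, mul_one, LinearIsometryEquiv.norm_map]
    have h2 : Real.sqrt m ≤ ‖adjoint f u‖ := by
      have hq := quad u
      rw [hu1, one_pow, mul_one] at hq
      calc Real.sqrt m ≤ Real.sqrt (‖adjoint f u‖ ^ 2) := Real.sqrt_le_sqrt hq
        _ = ‖adjoint f u‖ := Real.sqrt_sq (norm_nonneg _)
    linarith
  have hDmem : Real.sqrt m ∈ {d : ℝ | ∃ M : F →L[ℂ] E, ¬ Function.Surjective M ∧ d = ‖f - M‖} :=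
    ⟨M₀, hM₀, hRnorm.symm⟩
  have hDinf : sInf {d : ℝ | ∃ M : F →L[ℂ] E, ¬ Function.Surjective M ∧ d = ‖f - M‖}
      = Real.sqrt m :=
    le_antisymm (csInf_le ⟨Real.sqrt m, lbD⟩ hDmem) (le_csInf ⟨_, hDmem⟩ lbD)
  -- the spectrum side
  have hmS : ((m : ℝ) : ℂ) ∈ spectrum ℂ T := (stmt3_aux_spec_iff T m).mpr ⟨b i₀, hbne, hby⟩
  have lbS : ∀ t ∈ {t : ℝ | (t : ℂ) ∈ spectrum ℂ T}, m ≤ t := by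
    rintro t ht
    obtain ⟨v, hv0, hTv⟩ := (stmt3_aux_spec_iff T t).mp ht
    have h1 : ‖adjoint f v‖ ^ 2 = t * ‖v‖ ^ 2 := by
      rw [key, hTv, inner_smul_right]
      rw [RCLike.re_to_complex, Complex.re_ofReal_mul]
      congr 1
      exact inner_self_eq_norm_sq (𝕜 := ℂ) v
    have hq := quad v
    rw [h1] at hq
    have hv2 : 0 < ‖v‖ ^ 2 := pow_pos (norm_pos_iff.mpr hv0) 2
    exact le_of_mul_le_mul_right hq hv2
  have hSinf : sInf {t : ℝ | (t : ℂ) ∈ spectrum ℂ T} = m :=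
    le_antisymm (csInf_le ⟨m, lbS⟩ hmS) (le_csInf ⟨m, hmS⟩ lbS)
  rw [hDinf, hSinf, Real.sq_sqrt hm0]
end

section
/- Let (F, g) and (E, h) be finite-dimensional complex inner product spaces, let f : F → E be a surjective linear map, and let J ⊆ F denote the orthogonal complement of ker f. Then the distance from f to the set of non-surjective linear maps F → E equals the distance from the restriction f|_J to the set of non-surjective linear maps J → E; that is, inf_{g ∈ L_sing(F,E)} ‖f − g‖ = inf_{h ∈ L_sing(J,E)} ‖f|_J − h‖. -/
open ContinuousLinearMap

/-- Let `F` and `E` be finite-dimensional complex inner product spaces, `f : F → E` a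
surjective linear map, and `J = (ker f)ᗮ`. Then the distance from `f` to the set of
non-surjective linear maps `F → E` equals the distance from `f|_J` to the set of
non-surjective linear maps `J → E`. -/
theorem stmt6 (F E : Type*) [NormedAddCommGroup F] [InnerProductSpace ℂ F]
    [NormedAddCommGroup E] [InnerProductSpace ℂ E]
    [FiniteDimensional ℂ F] [FiniteDimensional ℂ E]
    (f : F →L[ℂ] E) (hf : Function.Surjective f) :
    sInf {d : ℝ | ∃ g : F →L[ℂ] E, ¬ Function.Surjective g ∧ d = ‖f - g‖} =
      sInf {d : ℝ | ∃ h : ((LinearMap.ker f)ᗮ : Submodule ℂ F) →L[ℂ] E,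
        ¬ Function.Surjective h ∧ d = ‖f ∘L (LinearMap.ker (f : F →ₗ[ℂ] E))ᗮ.subtypeL - h‖} := by
  set K : Submodule ℂ F := LinearMap.ker (f : F →ₗ[ℂ] E) with hK
  set ι : (Kᗮ : Submodule ℂ F) →L[ℂ] F := Kᗮ.subtypeL with hι
  set P : F →L[ℂ] (Kᗮ : Submodule ℂ F) := Submodule.orthogonalProjection Kᗮ with hPdef
  by_cases hE : Subsingleton E
  · have h1 : {d : ℝ | ∃ g : F →L[ℂ] E, ¬ Function.Surjective g ∧ d = ‖f - g‖} = ∅ := by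
      ext d
      simp only [Set.mem_setOf_eq, Set.mem_empty_iff_false, iff_false, not_exists]
      rintro g ⟨hg, -⟩
      exact hg fun y => ⟨0, Subsingleton.elim _ _⟩
    have h2 : {d : ℝ | ∃ h : (Kᗮ : Submodule ℂ F) →L[ℂ] E,
        ¬ Function.Surjective h ∧ d = ‖f ∘L ι - h‖} = ∅ := by
      ext d
      simp only [Set.mem_setOf_eq, Set.mem_empty_iff_false, iff_false, not_exists]
      rintro g ⟨hg, -⟩
      exact hg fun y => ⟨0, Subsingleton.elim _ _⟩
    rw [h1, h2]
  have : Nontrivial E := not_subsingleton_iff_nontrivial.mp hE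
  obtain ⟨y₀, hy₀⟩ := exists_ne (0 : E)
  have hz1 : ¬ Function.Surjective ((0 : F →L[ℂ] E)) := by
    intro h
    obtain ⟨x, hx⟩ := h y₀
    rw [ContinuousLinearMap.zero_apply] at hx
    exact hy₀ hx.symm
  have hz2 : ¬ Function.Surjective ((0 : (Kᗮ : Submodule ℂ F) →L[ℂ] E)) := by
    intro h
    obtain ⟨x, hx⟩ := h y₀
    rw [ContinuousLinearMap.zero_apply] at hx
    exact hy₀ hx.symm
  have hPι : ∀ v : (Kᗮ : Submodule ℂ F), P (ι v) = v := fun v =>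
    Submodule.orthogonalProjection_mem_subspace_eq_self v
  have hfP : ∀ x : F, f (ι (P x)) = f x := by
    intro x
    have hmem : x - (ι (P x)) ∈ Kᗮᗮ := Submodule.sub_starProjection_mem_orthogonal (K := Kᗮ) x
    rw [K.orthogonal_orthogonal] at hmem
    have : f (x - ι (P x)) = 0 := hmem
    rw [map_sub, sub_eq_zero] at this
    exact this.symm
  have hnormι : ‖ι‖ ≤ 1 := Submodule.norm_subtypeL_le _
  have hnormP : ‖P‖ ≤ 1 := Submodule.orthogonalProjection_norm_le _
  have hkey : ∀ h : (Kᗮ : Submodule ℂ F) →L[ℂ] E, ‖f ∘L ι - h‖ = ‖f - h ∘L P‖ := by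
    intro h
    have e1 : f ∘L ι - h = (f - h ∘L P) ∘L ι := by
      ext v
      simp [hPι v]
    have e2 : f - h ∘L P = (f ∘L ι - h) ∘L P := by
      ext x
      simp [hfP x]
    apply le_antisymm
    · calc ‖f ∘L ι - h‖ = ‖(f - h ∘L P) ∘L ι‖ := by rw [← e1]
        _ ≤ ‖f - h ∘L P‖ * ‖ι‖ := opNorm_comp_le _ _
        _ ≤ ‖f - h ∘L P‖ := mul_le_of_le_one_right (norm_nonneg _) hnormι
    · calc ‖f - h ∘L P‖ = ‖(f ∘L ι - h) ∘L P‖ := by rw [← e2]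
        _ ≤ ‖f ∘L ι - h‖ * ‖P‖ := opNorm_comp_le _ _
        _ ≤ ‖f ∘L ι - h‖ := mul_le_of_le_one_right (by positivity) hnormP
  set A := {d : ℝ | ∃ g : F →L[ℂ] E, ¬ Function.Surjective g ∧ d = ‖f - g‖} with hA
  set B := {d : ℝ | ∃ h : (Kᗮ : Submodule ℂ F) →L[ℂ] E,
        ¬ Function.Surjective h ∧ d = ‖f ∘L ι - h‖} with hB
  have hBsubA : B ⊆ A := by
    rintro d ⟨h, hns, rfl⟩
    refine ⟨h ∘L P, ?_, hkey h⟩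
    intro hsurj
    exact hns fun y => let ⟨x, hx⟩ := hsurj y; ⟨P x, hx⟩
  have hAbdd : BddBelow A := ⟨0, by rintro d ⟨g, -, rfl⟩; exact by positivity⟩
  have hBbdd : BddBelow B := ⟨0, by rintro d ⟨g, -, rfl⟩; exact by positivity⟩
  have hAne : A.Nonempty := ⟨‖f - 0‖, 0, hz1, rfl⟩
  have hBne : B.Nonempty := ⟨‖f ∘L ι - 0‖, 0, hz2, rfl⟩
  apply le_antisymm
  · exact csInf_le_csInf hAbdd hBne hBsubA
  · apply le_csInf hAne
    rintro d ⟨g, hns, rfl⟩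
    have hmem : ‖f ∘L ι - g ∘L ι‖ ∈ B := by
      refine ⟨g ∘L ι, ?_, rfl⟩
      intro hsurj
      exact hns fun y => let ⟨v, hv⟩ := hsurj y; ⟨ι v, hv⟩
    refine le_trans (csInf_le hBbdd hmem) ?_
    have e : f ∘L ι - g ∘L ι = (f - g) ∘L ι := by ext v; simp
    calc ‖f ∘L ι - g ∘L ι‖ = ‖(f - g) ∘L ι‖ := by rw [e]
      _ ≤ ‖f - g‖ * ‖ι‖ := opNorm_comp_le _ _
      _ ≤ ‖f - g‖ := mul_le_of_le_one_right (norm_nonneg _) hnormι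
end
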